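/- Fix integers m ≥ n+1 with n ≥ 2. For every nonzero a ∈ ℝ^{m−n} and every nonzero t ∈ ℝ, the following identity of (m+n)×(m+n) real matrices holds: w_{L_n}(a) · w_{L_{n−1}−L_n}(t) · w_{L_n}(a)⁻¹ = w_{L_{n−1}+L_n}(−(|a|²/2)·t). -/

import Mathlib

noncomputable section

open Matrix

/-- The `N × N` real matrix with `(k,l)` entry (1-based) equal to `1`
and all other entries `0`. -/
def Estd (N k l : ℕ) : Matrix (Fin N) (Fin N) ℝ :=
  Matrix.of fun p q => if p.val + 1 = k ∧ q.val + 1 = l then 1 else 0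

/-- `f_{L_i − L_j} = E_{i,j} − E_{j+n,i+n}` (1-based indices). -/
def fdiff (m n i j : ℕ) : Matrix (Fin (m + n)) (Fin (m + n)) ℝ :=
  Estd (m + n) i j - Estd (m + n) (j + n) (i + n)

/-- `f_{L_i + L_j} = E_{i,j+n} − E_{j,i+n}` (1-based indices, `i < j`). -/
def fplus (m n i j : ℕ) : Matrix (Fin (m + n)) (Fin (m + n)) ℝ :=
  Estd (m + n) i (j + n) - Estd (m + n) j (i + n)

/-- `f_{−L_i − L_j} = E_{j+n,i} − E_{i+n,j}` (1-based indices, `i < j`). -/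
def fnegplus (m n i j : ℕ) : Matrix (Fin (m + n)) (Fin (m + n)) ℝ :=
  Estd (m + n) (j + n) i - Estd (m + n) (i + n) j

/-- `x_{L_i − L_j}(t) = I + t f_{L_i−L_j}`. -/
def xdiff (m n i j : ℕ) (t : ℝ) : Matrix (Fin (m + n)) (Fin (m + n)) ℝ :=
  1 + t • fdiff m n i j

/-- `x_{L_i + L_j}(t) = I + t f_{L_i+L_j}`. -/
def xplus (m n i j : ℕ) (t : ℝ) : Matrix (Fin (m + n)) (Fin (m + n)) ℝ :=
  1 + t • fplus m n i j

/-- `x_{−L_i − L_j}(t) = I + t f_{−L_i−L_j}`. -/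
def xnegplus (m n i j : ℕ) (t : ℝ) : Matrix (Fin (m + n)) (Fin (m + n)) ℝ :=
  1 + t • fnegplus m n i j

/-- `w_{L_i−L_j}(t) = x_{L_i−L_j}(t) x_{L_j−L_i}(−t⁻¹) x_{L_i−L_j}(t)`. -/
def wdiff (m n i j : ℕ) (t : ℝ) : Matrix (Fin (m + n)) (Fin (m + n)) ℝ :=
  xdiff m n i j t * xdiff m n j i (-t⁻¹) * xdiff m n i j t

/-- `w_{L_i+L_j}(t) = x_{L_i+L_j}(t) x_{−L_i−L_j}(−t⁻¹) x_{L_i+L_j}(t)`. -/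
def wplus (m n i j : ℕ) (t : ℝ) : Matrix (Fin (m + n)) (Fin (m + n)) ℝ :=
  xplus m n i j t * xnegplus m n i j (-t⁻¹) * xplus m n i j t

/-- `f^ℓ_{L_i} = E_{i,2n+ℓ} − E_{2n+ℓ,i+n}` (1-based indices). -/
def fL (m n i ℓ : ℕ) : Matrix (Fin (m + n)) (Fin (m + n)) ℝ :=
  Estd (m + n) i (2 * n + ℓ) - Estd (m + n) (2 * n + ℓ) (i + n)

/-- `f^ℓ_{−L_i} = E_{i+n,2n+ℓ} − E_{2n+ℓ,i}` (1-based indices). -/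
def fnegL (m n i ℓ : ℕ) : Matrix (Fin (m + n)) (Fin (m + n)) ℝ :=
  Estd (m + n) (i + n) (2 * n + ℓ) - Estd (m + n) (2 * n + ℓ) i

/-- The squared Euclidean norm `|a|²` of `a ∈ ℝ^{m−n}`. -/
def sqnorm (d : ℕ) (a : Fin d → ℝ) : ℝ := ∑ ℓ, (a ℓ) ^ 2

/-- `x_{L_i}(a) = I + Σ_ℓ a_ℓ f^ℓ_{L_i} − (|a|²/2) E_{i,i+n}`. -/
def xL (m n i : ℕ) (a : Fin (m - n) → ℝ) : Matrix (Fin (m + n)) (Fin (m + n)) ℝ :=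
  1 + (∑ ℓ : Fin (m - n), a ℓ • fL m n i (ℓ.val + 1)) -
    (sqnorm (m - n) a / 2) • Estd (m + n) i (i + n)

/-- `x_{−L_i}(a) = I + Σ_ℓ a_ℓ f^ℓ_{−L_i} − (|a|²/2) E_{i+n,i}`. -/
def xnegL (m n i : ℕ) (a : Fin (m - n) → ℝ) : Matrix (Fin (m + n)) (Fin (m + n)) ℝ :=
  1 + (∑ ℓ : Fin (m - n), a ℓ • fnegL m n i (ℓ.val + 1)) -
    (sqnorm (m - n) a / 2) • Estd (m + n) (i + n) i

/-- `w_{L_i}(a) = x_{L_i}(a) · x_{−L_i}((2/|a|²)·a) · x_{L_i}(a)`. -/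
def wL (m n i : ℕ) (a : Fin (m - n) → ℝ) : Matrix (Fin (m + n)) (Fin (m + n)) ℝ :=
  xL m n i a * xnegL m n i ((2 / sqnorm (m - n) a) • a) * xL m n i a

lemma Estd_mul_Estd (N k l k' l' : ℕ) :
    Estd N k l * Estd N k' l' =
      if l = k' ∧ 1 ≤ l ∧ l ≤ N then Estd N k l' else 0 := by
  ext p q
  simp only [Matrix.mul_apply, Estd, Matrix.of_apply]
  split_ifs with h
  · obtain ⟨rfl, h1, h2⟩ := h
    rw [Finset.sum_eq_single (⟨l - 1, by omega⟩ : Fin N)]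
    · simp only [Matrix.of_apply]
      have : l - 1 + 1 = l := by omega
      rw [this]
      by_cases h3 : p.val + 1 = k <;> by_cases h4 : q.val + 1 = l' <;> simp [h3, h4]
    · intro j _ hj
      have : j.val + 1 ≠ l := by
        intro hc; apply hj; apply Fin.ext; simp; omega
      simp [this]
    · simp
  · apply Finset.sum_eq_zero
    intro j _
    by_cases h1 : j.val + 1 = l
    · have : ¬ (j.val + 1 = k' ∧ q.val + 1 = l') := by
        rintro ⟨h2, -⟩
        exact h ⟨by omega, by omega, by have := j.isLt; omega⟩
      simp [this]
    · simp [h1]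

def vA (m n : ℕ) (v : Fin (m - n) → ℝ) : Matrix (Fin (m + n)) (Fin (m + n)) ℝ :=
  ∑ ℓ, v ℓ • Estd (m + n) n (2 * n + (ℓ.val + 1))
def vB (m n : ℕ) (v : Fin (m - n) → ℝ) : Matrix (Fin (m + n)) (Fin (m + n)) ℝ :=
  ∑ ℓ, v ℓ • Estd (m + n) (2 * n + (ℓ.val + 1)) (n + n)
def vC (m n : ℕ) (v : Fin (m - n) → ℝ) : Matrix (Fin (m + n)) (Fin (m + n)) ℝ :=
  ∑ ℓ, v ℓ • Estd (m + n) (n + n) (2 * n + (ℓ.val + 1))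
def vD (m n : ℕ) (v : Fin (m - n) → ℝ) : Matrix (Fin (m + n)) (Fin (m + n)) ℝ :=
  ∑ ℓ, v ℓ • Estd (m + n) (2 * n + (ℓ.val + 1)) n
def vT (m n : ℕ) (v w : Fin (m - n) → ℝ) : Matrix (Fin (m + n)) (Fin (m + n)) ℝ :=
  ∑ ℓ, ∑ k, (v ℓ * w k) • Estd (m + n) (2 * n + (ℓ.val + 1)) (2 * n + (k.val + 1))

section
variable {m n : ℕ}

lemma tail_cond (ℓ k : Fin (m - n)) :
    (2 * n + (ℓ.val + 1) = 2 * n + (k.val + 1) ∧ 1 ≤ 2 * n + (ℓ.val + 1) ∧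
      2 * n + (ℓ.val + 1) ≤ m + n) ↔ ℓ = k := by
  constructor
  · rintro ⟨h, -, -⟩; exact Fin.ext (by omega)
  · rintro rfl
    exact ⟨rfl, by omega, by have := ℓ.isLt; omega⟩

/-! contraction lemmas -/

lemma vA_mul_vD (v w : Fin (m - n) → ℝ) :
    vA m n v * vD m n w = (∑ ℓ, v ℓ * w ℓ) • Estd (m + n) n n := by
  unfold vA vD
  simp only [Finset.sum_mul, Finset.mul_sum, smul_mul_assoc, mul_smul_comm, smul_smul,
    Estd_mul_Estd, tail_cond, smul_ite, smul_zero, Finset.sum_ite_eq, Finset.sum_ite_eq',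
    Finset.mem_univ, if_true, Finset.smul_sum]
  rw [Finset.sum_smul]
  exact Finset.sum_congr rfl fun i _ => by rw [mul_comm]

lemma vA_mul_vB (v w : Fin (m - n) → ℝ) :
    vA m n v * vB m n w = (∑ ℓ, v ℓ * w ℓ) • Estd (m + n) n (n + n) := by
  unfold vA vB
  simp only [Finset.sum_mul, Finset.mul_sum, smul_mul_assoc, mul_smul_comm, smul_smul,
    Estd_mul_Estd, tail_cond, smul_ite, smul_zero, Finset.sum_ite_eq, Finset.sum_ite_eq',
    Finset.mem_univ, if_true, Finset.smul_sum]
  rw [Finset.sum_smul]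
  exact Finset.sum_congr rfl fun i _ => by rw [mul_comm]

lemma vC_mul_vB (v w : Fin (m - n) → ℝ) :
    vC m n v * vB m n w = (∑ ℓ, v ℓ * w ℓ) • Estd (m + n) (n + n) (n + n) := by
  unfold vC vB
  simp only [Finset.sum_mul, Finset.mul_sum, smul_mul_assoc, mul_smul_comm, smul_smul,
    Estd_mul_Estd, tail_cond, smul_ite, smul_zero, Finset.sum_ite_eq, Finset.sum_ite_eq',
    Finset.mem_univ, if_true, Finset.smul_sum]
  rw [Finset.sum_smul]
  exact Finset.sum_congr rfl fun i _ => by rw [mul_comm]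

lemma vC_mul_vD (v w : Fin (m - n) → ℝ) :
    vC m n v * vD m n w = (∑ ℓ, v ℓ * w ℓ) • Estd (m + n) (n + n) n := by
  unfold vC vD
  simp only [Finset.sum_mul, Finset.mul_sum, smul_mul_assoc, mul_smul_comm, smul_smul,
    Estd_mul_Estd, tail_cond, smul_ite, smul_zero, Finset.sum_ite_eq, Finset.sum_ite_eq',
    Finset.mem_univ, if_true, Finset.smul_sum]
  rw [Finset.sum_smul]
  exact Finset.sum_congr rfl fun i _ => by rw [mul_comm]

/-! products landing in `vT` -/

lemma vB_mul_vC (hn : 2 ≤ n) (hm : n + 1 ≤ m) (v w : Fin (m - n) → ℝ) :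
    vB m n v * vC m n w = vT m n v w := by
  have h1 : 1 ≤ n + n := by omega
  have h2 : n + n ≤ m + n := by omega
  unfold vB vC vT
  simp only [Finset.sum_mul, Finset.mul_sum, smul_mul_assoc, mul_smul_comm, smul_smul,
    Estd_mul_Estd]
  simp only [h1, h2, and_true, true_and, if_true, eq_self_iff_true]
  rw [Finset.sum_comm]
  refine Finset.sum_congr rfl fun ℓ _ => ?_
  rw [Finset.smul_sum]
  exact Finset.sum_congr rfl fun k _ => by rw [smul_smul, mul_comm]

lemma vD_mul_vA (hn : 2 ≤ n) (hm : n + 1 ≤ m) (v w : Fin (m - n) → ℝ) :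
    vD m n v * vA m n w = vT m n v w := by
  have h1 : 1 ≤ n := by omega
  have h2 : n ≤ m + n := by omega
  unfold vD vA vT
  simp only [Finset.sum_mul, Finset.mul_sum, smul_mul_assoc, mul_smul_comm, smul_smul,
    Estd_mul_Estd]
  simp only [h1, h2, and_true, true_and, if_true, eq_self_iff_true]
  rw [Finset.sum_comm]
  refine Finset.sum_congr rfl fun ℓ _ => ?_
  rw [Finset.smul_sum]
  exact Finset.sum_congr rfl fun k _ => by rw [smul_smul, mul_comm]
end

/-! further atom lemmas -/
section
variable {m n : ℕ}

/-! zero products among atoms -/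

lemma vA_mul_vA (v w : Fin (m - n) → ℝ) : vA m n v * vA m n w = 0 := by
  unfold vA
  simp only [Finset.sum_mul, Finset.mul_sum, smul_mul_assoc, mul_smul_comm, smul_smul,
    Estd_mul_Estd]
  have h : ∀ x : ℕ, ¬(2 * n + (x + 1) = n) := fun x => by omega
  simp [h]

lemma vA_mul_vC (v w : Fin (m - n) → ℝ) : vA m n v * vC m n w = 0 := by
  unfold vA vC
  simp only [Finset.sum_mul, Finset.mul_sum, smul_mul_assoc, mul_smul_comm, smul_smul,
    Estd_mul_Estd]
  have h : ∀ x : ℕ, ¬(2 * n + (x + 1) = n + n) := fun x => by omega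
  simp [h]

lemma vB_mul_vA (hn : 2 ≤ n) (v w : Fin (m - n) → ℝ) : vB m n v * vA m n w = 0 := by
  unfold vA vB
  simp only [Finset.sum_mul, Finset.mul_sum, smul_mul_assoc, mul_smul_comm, smul_smul,
    Estd_mul_Estd]
  have h : ¬(n + n = n) := by omega
  simp [h]
  exact fun h0 => absurd h0 (by omega)

lemma vB_mul_vB (v w : Fin (m - n) → ℝ) : vB m n v * vB m n w = 0 := by
  unfold vB
  simp only [Finset.sum_mul, Finset.mul_sum, smul_mul_assoc, mul_smul_comm, smul_smul,
    Estd_mul_Estd]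
  have h : ∀ x : ℕ, ¬(n + n = 2 * n + (x + 1)) := fun x => by omega
  simp [h]

lemma vB_mul_vD (v w : Fin (m - n) → ℝ) : vB m n v * vD m n w = 0 := by
  unfold vB vD
  simp only [Finset.sum_mul, Finset.mul_sum, smul_mul_assoc, mul_smul_comm, smul_smul,
    Estd_mul_Estd]
  have h : ∀ x : ℕ, ¬(n + n = 2 * n + (x + 1)) := fun x => by omega
  simp [h]

lemma vB_mul_vT (v w u : Fin (m - n) → ℝ) : vB m n v * vT m n w u = 0 := by
  unfold vB vT
  simp only [Finset.sum_mul, Finset.mul_sum, smul_mul_assoc, mul_smul_comm, smul_smul,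
    Estd_mul_Estd]
  have h : ∀ x : ℕ, ¬(n + n = 2 * n + (x + 1)) := fun x => by omega
  simp [h]

lemma vC_mul_vA (v w : Fin (m - n) → ℝ) : vC m n v * vA m n w = 0 := by
  unfold vA vC
  simp only [Finset.sum_mul, Finset.mul_sum, smul_mul_assoc, mul_smul_comm, smul_smul,
    Estd_mul_Estd]
  have h : ∀ x : ℕ, ¬(2 * n + (x + 1) = n) := fun x => by omega
  simp [h]

lemma vC_mul_vC (v w : Fin (m - n) → ℝ) : vC m n v * vC m n w = 0 := by
  unfold vC
  simp only [Finset.sum_mul, Finset.mul_sum, smul_mul_assoc, mul_smul_comm, smul_smul,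
    Estd_mul_Estd]
  have h : ∀ x : ℕ, ¬(2 * n + (x + 1) = n + n) := fun x => by omega
  simp [h]

lemma vD_mul_vB (hn : 2 ≤ n) (v w : Fin (m - n) → ℝ) : vD m n v * vB m n w = 0 := by
  unfold vB vD
  simp only [Finset.sum_mul, Finset.mul_sum, smul_mul_assoc, mul_smul_comm, smul_smul,
    Estd_mul_Estd]
  have h : ∀ x : ℕ, ¬(n = 2 * n + (x + 1)) := fun x => by omega
  simp [h]

lemma vD_mul_vC (hn : 2 ≤ n) (v w : Fin (m - n) → ℝ) : vD m n v * vC m n w = 0 := by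
  unfold vC vD
  simp only [Finset.sum_mul, Finset.mul_sum, smul_mul_assoc, mul_smul_comm, smul_smul,
    Estd_mul_Estd]
  have h : ¬(n = n + n) := by omega
  simp [h]

lemma vD_mul_vD (hn : 2 ≤ n) (v w : Fin (m - n) → ℝ) : vD m n v * vD m n w = 0 := by
  unfold vD
  simp only [Finset.sum_mul, Finset.mul_sum, smul_mul_assoc, mul_smul_comm, smul_smul,
    Estd_mul_Estd]
  have h : ∀ x : ℕ, ¬(n = 2 * n + (x + 1)) := fun x => by omega
  simp [h]

lemma vD_mul_vT (hn : 2 ≤ n) (v w u : Fin (m - n) → ℝ) : vD m n v * vT m n w u = 0 := by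
  unfold vD vT
  simp only [Finset.sum_mul, Finset.mul_sum, smul_mul_assoc, mul_smul_comm, smul_smul,
    Estd_mul_Estd]
  have h : ∀ x : ℕ, ¬(n = 2 * n + (x + 1)) := fun x => by omega
  simp [h]

lemma vT_mul_vA (v w u : Fin (m - n) → ℝ) : vT m n v w * vA m n u = 0 := by
  unfold vA vT
  simp only [Finset.sum_mul, Finset.mul_sum, smul_mul_assoc, mul_smul_comm, smul_smul,
    Estd_mul_Estd]
  have h : ∀ x : ℕ, ¬(2 * n + (x + 1) = n) := fun x => by omega
  simp [h]

lemma vT_mul_vC (v w u : Fin (m - n) → ℝ) : vT m n v w * vC m n u = 0 := by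
  unfold vC vT
  simp only [Finset.sum_mul, Finset.mul_sum, smul_mul_assoc, mul_smul_comm, smul_smul,
    Estd_mul_Estd]
  have h : ∀ x : ℕ, ¬(2 * n + (x + 1) = n + n) := fun x => by omega
  simp [h]

/-! atom times scalar `Estd` -/

lemma vA_mul_Estd (v : Fin (m - n) → ℝ) (k l : ℕ) (hk : k ≤ 2 * n) :
    vA m n v * Estd (m + n) k l = 0 := by
  unfold vA
  simp only [Finset.sum_mul, smul_mul_assoc, Estd_mul_Estd]
  have h : ∀ x : ℕ, ¬(2 * n + (x + 1) = k) := fun x => by omega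
  simp [h]

lemma vC_mul_Estd (v : Fin (m - n) → ℝ) (k l : ℕ) (hk : k ≤ 2 * n) :
    vC m n v * Estd (m + n) k l = 0 := by
  unfold vC
  simp only [Finset.sum_mul, smul_mul_assoc, Estd_mul_Estd]
  have h : ∀ x : ℕ, ¬(2 * n + (x + 1) = k) := fun x => by omega
  simp [h]

lemma vT_mul_Estd (v w : Fin (m - n) → ℝ) (k l : ℕ) (hk : k ≤ 2 * n) :
    vT m n v w * Estd (m + n) k l = 0 := by
  unfold vT
  simp only [Finset.sum_mul, smul_mul_assoc, Estd_mul_Estd]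
  have h : ∀ x : ℕ, ¬(2 * n + (x + 1) = k) := fun x => by omega
  simp [h]

lemma Estd_mul_vB (v : Fin (m - n) → ℝ) (k l : ℕ) (hl : l ≤ 2 * n) :
    Estd (m + n) k l * vB m n v = 0 := by
  unfold vB
  simp only [Finset.mul_sum, mul_smul_comm, Estd_mul_Estd]
  have h : ∀ x : ℕ, ¬(l = 2 * n + (x + 1)) := fun x => by omega
  simp [h]

lemma Estd_mul_vD (v : Fin (m - n) → ℝ) (k l : ℕ) (hl : l ≤ 2 * n) :
    Estd (m + n) k l * vD m n v = 0 := by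
  unfold vD
  simp only [Finset.mul_sum, mul_smul_comm, Estd_mul_Estd]
  have h : ∀ x : ℕ, ¬(l = 2 * n + (x + 1)) := fun x => by omega
  simp [h]

lemma Estd_mul_vT (v w : Fin (m - n) → ℝ) (k l : ℕ) (hl : l ≤ 2 * n) :
    Estd (m + n) k l * vT m n v w = 0 := by
  unfold vT
  simp only [Finset.mul_sum, mul_smul_comm, Estd_mul_Estd]
  have h : ∀ x : ℕ, ¬(l = 2 * n + (x + 1)) := fun x => by omega
  simp [h]

lemma vB_mul_Estd (v : Fin (m - n) → ℝ) (k l : ℕ) (hk : ¬(n + n = k)) :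
    vB m n v * Estd (m + n) k l = 0 := by
  unfold vB
  simp only [Finset.sum_mul, smul_mul_assoc, Estd_mul_Estd]
  simp [hk]

lemma vD_mul_Estd (v : Fin (m - n) → ℝ) (k l : ℕ) (hk : ¬(n = k)) :
    vD m n v * Estd (m + n) k l = 0 := by
  unfold vD
  simp only [Finset.sum_mul, smul_mul_assoc, Estd_mul_Estd]
  simp [hk]

lemma Estd_mul_vA (v : Fin (m - n) → ℝ) (k l : ℕ) (hl : ¬(l = n)) :
    Estd (m + n) k l * vA m n v = 0 := by
  unfold vA
  simp only [Finset.mul_sum, mul_smul_comm, Estd_mul_Estd]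
  simp [hl]

lemma Estd_mul_vC (v : Fin (m - n) → ℝ) (k l : ℕ) (hl : ¬(l = n + n)) :
    Estd (m + n) k l * vC m n v = 0 := by
  unfold vC
  simp only [Finset.mul_sum, mul_smul_comm, Estd_mul_Estd]
  simp [hl]

lemma Enn_mul_vA (hn : 2 ≤ n) (v : Fin (m - n) → ℝ) :
    Estd (m + n) n n * vA m n v = vA m n v := by
  unfold vA
  simp only [Finset.mul_sum, mul_smul_comm, Estd_mul_Estd]
  have h1 : 1 ≤ n := by omega
  have h2 : n ≤ m + n := by omega
  simp [h1, h2]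

lemma Q_mul_vA (hn : 2 ≤ n) (v : Fin (m - n) → ℝ) :
    Estd (m + n) (n + n) n * vA m n v = vC m n v := by
  unfold vA vC
  simp only [Finset.mul_sum, mul_smul_comm, Estd_mul_Estd]
  have h1 : 1 ≤ n := by omega
  have h2 : n ≤ m + n := by omega
  simp [h1, h2]

lemma P_mul_vC (hn : 2 ≤ n) (hm : n + 1 ≤ m) (v : Fin (m - n) → ℝ) :
    Estd (m + n) n (n + n) * vC m n v = vA m n v := by
  unfold vA vC
  simp only [Finset.mul_sum, mul_smul_comm, Estd_mul_Estd]
  have h1 : 1 ≤ n + n := by omega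
  have h2 : n + n ≤ m + n := by omega
  simp [h1, h2]

lemma Enn2_mul_vC (hn : 2 ≤ n) (hm : n + 1 ≤ m) (v : Fin (m - n) → ℝ) :
    Estd (m + n) (n + n) (n + n) * vC m n v = vC m n v := by
  unfold vC
  simp only [Finset.mul_sum, mul_smul_comm, Estd_mul_Estd]
  have h1 : 1 ≤ n + n := by omega
  have h2 : n + n ≤ m + n := by omega
  simp [h1, h2]

lemma vB_mul_Q (hn : 2 ≤ n) (hm : n + 1 ≤ m) (v : Fin (m - n) → ℝ) :
    vB m n v * Estd (m + n) (n + n) n = vD m n v := by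
  unfold vB vD
  simp only [Finset.sum_mul, smul_mul_assoc, Estd_mul_Estd]
  have h1 : 1 ≤ n + n := by omega
  have h2 : n + n ≤ m + n := by omega
  simp [h1, h2]

lemma vB_mul_Enn2 (hn : 2 ≤ n) (hm : n + 1 ≤ m) (v : Fin (m - n) → ℝ) :
    vB m n v * Estd (m + n) (n + n) (n + n) = vB m n v := by
  unfold vB
  simp only [Finset.sum_mul, smul_mul_assoc, Estd_mul_Estd]
  have h1 : 1 ≤ n + n := by omega
  have h2 : n + n ≤ m + n := by omega
  simp [h1, h2]

lemma vD_mul_P (hn : 2 ≤ n) (v : Fin (m - n) → ℝ) :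
    vD m n v * Estd (m + n) n (n + n) = vB m n v := by
  unfold vB vD
  simp only [Finset.sum_mul, smul_mul_assoc, Estd_mul_Estd]
  have h1 : 1 ≤ n := by omega
  have h2 : n ≤ m + n := by omega
  simp [h1, h2]

lemma vD_mul_Enn (hn : 2 ≤ n) (v : Fin (m - n) → ℝ) :
    vD m n v * Estd (m + n) n n = vD m n v := by
  unfold vD
  simp only [Finset.sum_mul, smul_mul_assoc, Estd_mul_Estd]
  have h1 : 1 ≤ n := by omega
  have h2 : n ≤ m + n := by omega
  simp [h1, h2]

/-! products involving `vT`, derived from `vT = vD * vA` -/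

lemma vA_mul_vT (hn : 2 ≤ n) (hm : n + 1 ≤ m) (v w u : Fin (m - n) → ℝ) :
    vA m n v * vT m n w u = (∑ ℓ, v ℓ * w ℓ) • vA m n u := by
  rw [← vD_mul_vA hn hm, ← mul_assoc, vA_mul_vD, smul_mul_assoc, Enn_mul_vA hn]

lemma vC_mul_vT (hn : 2 ≤ n) (hm : n + 1 ≤ m) (v w u : Fin (m - n) → ℝ) :
    vC m n v * vT m n w u = (∑ ℓ, v ℓ * w ℓ) • vC m n u := by
  rw [← vD_mul_vA hn hm, ← mul_assoc, vC_mul_vD, smul_mul_assoc, Q_mul_vA hn]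

lemma vT_mul_vB (hn : 2 ≤ n) (hm : n + 1 ≤ m) (v w u : Fin (m - n) → ℝ) :
    vT m n v w * vB m n u = (∑ ℓ, w ℓ * u ℓ) • vB m n v := by
  rw [← vD_mul_vA hn hm, mul_assoc, vA_mul_vB, mul_smul_comm, vD_mul_P hn]

lemma vT_mul_vD' (hn : 2 ≤ n) (hm : n + 1 ≤ m) (v w u : Fin (m - n) → ℝ) :
    vT m n v w * vD m n u = (∑ ℓ, w ℓ * u ℓ) • vD m n v := by
  rw [← vD_mul_vA hn hm, mul_assoc, vA_mul_vD, mul_smul_comm, vD_mul_Enn hn]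

lemma vT_mul_vT (hn : 2 ≤ n) (hm : n + 1 ≤ m) (v w u z : Fin (m - n) → ℝ) :
    vT m n v w * vT m n u z = (∑ ℓ, w ℓ * u ℓ) • vT m n v z := by
  rw [← vD_mul_vA hn hm (v := v) (w := w), ← vD_mul_vA hn hm (v := u) (w := z),
    mul_assoc, ← mul_assoc (vA m n w), vA_mul_vD, smul_mul_assoc, Enn_mul_vA hn,
    mul_smul_comm, vD_mul_vA hn hm]
end

/-! ## Closed forms for the Weyl elements -/
section
variable {m n : ℕ}

lemma sum_fL (v : Fin (m - n) → ℝ) :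
    (∑ ℓ : Fin (m - n), v ℓ • fL m n n (ℓ.val + 1)) = vA m n v - vB m n v := by
  unfold fL vA vB
  rw [← Finset.sum_sub_distrib]
  exact Finset.sum_congr rfl fun ℓ _ => smul_sub _ _ _

lemma sum_fnegL (v : Fin (m - n) → ℝ) :
    (∑ ℓ : Fin (m - n), v ℓ • fnegL m n n (ℓ.val + 1)) = vC m n v - vD m n v := by
  unfold fnegL vC vD
  rw [← Finset.sum_sub_distrib]
  exact Finset.sum_congr rfl fun ℓ _ => smul_sub _ _ _

lemma vC_smul (c : ℝ) (v : Fin (m - n) → ℝ) : vC m n (c • v) = c • vC m n v := by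
  simp [vC, Finset.smul_sum, smul_smul]

lemma vD_smul (c : ℝ) (v : Fin (m - n) → ℝ) : vD m n (c • v) = c • vD m n v := by
  simp [vD, Finset.smul_sum, smul_smul]

lemma sqnorm_smul (d : ℕ) (c : ℝ) (a : Fin d → ℝ) :
    sqnorm d (c • a) = c ^ 2 * sqnorm d a := by
  simp [sqnorm, Finset.mul_sum, mul_pow]

lemma sqnorm_pos (d : ℕ) (a : Fin d → ℝ) (ha : a ≠ 0) : 0 < sqnorm d a := by
  obtain ⟨ℓ, hℓ⟩ := Function.ne_iff.mp ha
  exact Finset.sum_pos' (fun i _ => sq_nonneg _) ⟨ℓ, Finset.mem_univ _, lt_of_le_of_ne (sq_nonneg _) (Ne.symm (pow_ne_zero 2 hℓ))⟩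

lemma dot_self (d : ℕ) (a : Fin d → ℝ) : (∑ ℓ, a ℓ * a ℓ) = sqnorm d a := by
  simp [sqnorm, pow_two]

end

def Wmat (m n : ℕ) (a : Fin (m - n) → ℝ) : Matrix (Fin (m + n)) (Fin (m + n)) ℝ :=
  1 - Estd (m + n) n n - Estd (m + n) (n + n) (n + n)
    - (sqnorm (m - n) a / 2) • Estd (m + n) n (n + n)
    - (2 / sqnorm (m - n) a) • Estd (m + n) (n + n) n
    - (2 / sqnorm (m - n) a) • vT m n a a

def Dmat (m n : ℕ) (t : ℝ) : Matrix (Fin (m + n)) (Fin (m + n)) ℝ :=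
  1 - Estd (m + n) (n - 1) (n - 1) - Estd (m + n) n n
    - Estd (m + n) (n - 1 + n) (n - 1 + n) - Estd (m + n) (n + n) (n + n)
    + t • Estd (m + n) (n - 1) n - t⁻¹ • Estd (m + n) n (n - 1)
    + t⁻¹ • Estd (m + n) (n - 1 + n) (n + n) - t • Estd (m + n) (n + n) (n - 1 + n)

def Pmat (m n : ℕ) (s : ℝ) : Matrix (Fin (m + n)) (Fin (m + n)) ℝ :=
  1 - Estd (m + n) (n - 1) (n - 1) - Estd (m + n) n n
    - Estd (m + n) (n - 1 + n) (n - 1 + n) - Estd (m + n) (n + n) (n + n)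
    + s • Estd (m + n) (n - 1) (n + n) - s • Estd (m + n) n (n - 1 + n)
    + s⁻¹ • Estd (m + n) (n - 1 + n) n - s⁻¹ • Estd (m + n) (n + n) (n - 1)

section
variable {m n : ℕ}

lemma wdiff_eq (hn : 2 ≤ n) (hm : n + 1 ≤ m) (t : ℝ) (ht : t ≠ 0) :
    wdiff m n (n - 1) n t = Dmat m n t := by
  have e1 : ¬(n - 1 = n) := by omega
  have e2 : ¬(n = n - 1) := by omega
  have e3 : ¬(n - 1 = n + n) := by omega
  have e4 : ¬(n + n = n - 1) := by omega
  have e5 : ¬(n - 1 = n - 1 + n) := by omega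
  have e6 : ¬(n - 1 + n = n - 1) := by omega
  have e7 : ¬(n = n + n) := by omega
  have e8 : ¬(n + n = n) := by omega
  have e9 : ¬(n = n - 1 + n) := by omega
  have e10 : ¬(n - 1 + n = n) := by omega
  have e11 : ¬(n + n = n - 1 + n) := by omega
  have e12 : ¬(n - 1 + n = n + n) := by omega
  have r1 : 1 ≤ n - 1 := by omega
  have r2 : 1 ≤ n := by omega
  have r3 : 1 ≤ n - 1 + n := by omega
  have r4 : 1 ≤ n + n := by omega
  have r5 : n - 1 ≤ m + n := by omega
  have r6 : n ≤ m + n := by omega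
  have r7 : n - 1 + n ≤ m + n := by omega
  have r8 : n + n ≤ m + n := by omega
  unfold wdiff xdiff fdiff Dmat
  simp only [smul_add, smul_sub, mul_add, add_mul, mul_sub, sub_mul, mul_one, one_mul,
    smul_mul_assoc, mul_smul_comm, smul_smul, Estd_mul_Estd,
    e1, e2, e3, e4, e5, e6, e7, e8, e9, e10, e11, e12, r1, r2, r3, r4, r5, r6,
    r7, r8, eq_self_iff_true, true_and, and_true, and_self, false_and, if_true, if_false,
    not_false_iff, not_false_eq_true,
    smul_zero, zero_mul, mul_zero, sub_zero, zero_sub, add_zero, zero_add, neg_zero,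
    smul_ite, smul_neg, neg_smul, neg_neg, mul_neg, neg_mul, sub_neg_eq_add]
  match_scalars <;> field_simp <;> ring
end

section
variable {m n : ℕ}

lemma wplus_eq (hn : 2 ≤ n) (hm : n + 1 ≤ m) (s : ℝ) (hs : s ≠ 0) :
    wplus m n (n - 1) n s = Pmat m n s := by
  have e1 : ¬(n - 1 = n) := by omega
  have e2 : ¬(n = n - 1) := by omega
  have e3 : ¬(n - 1 = n + n) := by omega
  have e4 : ¬(n + n = n - 1) := by omega
  have e5 : ¬(n - 1 = n - 1 + n) := by omega
  have e6 : ¬(n - 1 + n = n - 1) := by omega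
  have e7 : ¬(n = n + n) := by omega
  have e8 : ¬(n + n = n) := by omega
  have e9 : ¬(n = n - 1 + n) := by omega
  have e10 : ¬(n - 1 + n = n) := by omega
  have e11 : ¬(n + n = n - 1 + n) := by omega
  have e12 : ¬(n - 1 + n = n + n) := by omega
  have r1 : 1 ≤ n - 1 := by omega
  have r2 : 1 ≤ n := by omega
  have r3 : 1 ≤ n - 1 + n := by omega
  have r4 : 1 ≤ n + n := by omega
  have r5 : n - 1 ≤ m + n := by omega
  have r6 : n ≤ m + n := by omega
  have r7 : n - 1 + n ≤ m + n := by omega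
  have r8 : n + n ≤ m + n := by omega
  unfold wplus xplus xnegplus fplus fnegplus Pmat
  simp only [smul_add, smul_sub, mul_add, add_mul, mul_sub, sub_mul, mul_one, one_mul,
    smul_mul_assoc, mul_smul_comm, smul_smul, Estd_mul_Estd,
    e1, e2, e3, e4, e5, e6, e7, e8, e9, e10, e11, e12, r1, r2, r3, r4, r5, r6,
    r7, r8, eq_self_iff_true, true_and, and_true, and_self, false_and, if_true, if_false,
    not_false_iff, not_false_eq_true,
    smul_zero, zero_mul, mul_zero, sub_zero, zero_sub, add_zero, zero_add, neg_zero,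
    smul_ite, smul_neg, neg_smul, neg_neg, mul_neg, neg_mul, sub_neg_eq_add]
  match_scalars <;> field_simp <;> ring

lemma wL_eq (hn : 2 ≤ n) (hm : n + 1 ≤ m) (a : Fin (m - n) → ℝ)
    (ha : sqnorm (m - n) a ≠ 0) : wL m n n a = Wmat m n a := by
  have e7 : ¬(n = n + n) := by omega
  have e8 : ¬(n + n = n) := by omega
  have r2 : 1 ≤ n := by omega
  have r4 : 1 ≤ n + n := by omega
  have r6 : n ≤ m + n := by omega
  have r8 : n + n ≤ m + n := by omega
  have q1 : n ≤ 2 * n := by omega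
  have q2 : n + n ≤ 2 * n := by omega
  unfold wL xL xnegL Wmat
  rw [sum_fL, sum_fnegL, vC_smul, vD_smul, sqnorm_smul]
  simp only [smul_add, smul_sub, mul_add, add_mul, mul_sub, sub_mul, mul_one, one_mul,
    smul_mul_assoc, mul_smul_comm, smul_smul, Estd_mul_Estd,
    vA_mul_vA, vA_mul_vB, vA_mul_vC, vA_mul_vD, vA_mul_vT hn hm, vA_mul_Estd,
    vB_mul_vA hn, vB_mul_vB, vB_mul_vC hn hm, vB_mul_vD, vB_mul_vT,
    vB_mul_Q hn hm, vB_mul_Enn2 hn hm,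
    vC_mul_vA, vC_mul_vB, vC_mul_vC, vC_mul_vD, vC_mul_vT hn hm, vC_mul_Estd,
    vD_mul_vA hn hm, vD_mul_vB hn, vD_mul_vC hn, vD_mul_vD hn, vD_mul_vT hn,
    vD_mul_P hn, vD_mul_Enn hn,
    vT_mul_vA, vT_mul_vB hn hm, vT_mul_vC, vT_mul_vD' hn hm, vT_mul_vT hn hm, vT_mul_Estd,
    Estd_mul_vA, Estd_mul_vB, Estd_mul_vC, Estd_mul_vD, Estd_mul_vT, vB_mul_Estd, vD_mul_Estd,
    Enn_mul_vA hn, Q_mul_vA hn, P_mul_vC hn hm, Enn2_mul_vC hn hm, dot_self,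
    e7, e8, r2, r4, r6, r8, q1, q2,
    eq_self_iff_true, true_and, and_true, and_self, false_and, if_true, if_false,
    not_false_iff, not_false_eq_true,
    smul_zero, zero_mul, mul_zero, sub_zero, zero_sub, add_zero, zero_add, neg_zero,
    smul_ite, smul_neg, neg_smul, neg_neg, mul_neg, neg_mul, sub_neg_eq_add]
  match_scalars <;> field_simp <;> ring

lemma Wmat_mul_Wmat (hn : 2 ≤ n) (hm : n + 1 ≤ m) (a : Fin (m - n) → ℝ)
    (ha : sqnorm (m - n) a ≠ 0) : Wmat m n a * Wmat m n a = 1 := by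
  have e7 : ¬(n = n + n) := by omega
  have e8 : ¬(n + n = n) := by omega
  have r2 : 1 ≤ n := by omega
  have r4 : 1 ≤ n + n := by omega
  have r6 : n ≤ m + n := by omega
  have r8 : n + n ≤ m + n := by omega
  have q1 : n ≤ 2 * n := by omega
  have q2 : n + n ≤ 2 * n := by omega
  unfold Wmat
  simp only [smul_add, smul_sub, mul_add, add_mul, mul_sub, sub_mul, mul_one, one_mul,
    smul_mul_assoc, mul_smul_comm, smul_smul, Estd_mul_Estd,
    vT_mul_vT hn hm, vT_mul_Estd, Estd_mul_vT, dot_self,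
    e7, e8, r2, r4, r6, r8, q1, q2,
    eq_self_iff_true, true_and, and_true, and_self, false_and, if_true, if_false,
    not_false_iff, not_false_eq_true,
    smul_zero, zero_mul, mul_zero, sub_zero, zero_sub, add_zero, zero_add, neg_zero,
    smul_ite, smul_neg, neg_smul, neg_neg, mul_neg, neg_mul, sub_neg_eq_add]
  match_scalars <;> field_simp <;> ring

lemma Wmat_mul_Dmat (hn : 2 ≤ n) (hm : n + 1 ≤ m) (a : Fin (m - n) → ℝ) (t : ℝ)
    (ha : sqnorm (m - n) a ≠ 0) (ht : t ≠ 0) :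
    Wmat m n a * Dmat m n t = Pmat m n (-(sqnorm (m - n) a / 2) * t) * Wmat m n a := by
  have e1 : ¬(n - 1 = n) := by omega
  have e2 : ¬(n = n - 1) := by omega
  have e3 : ¬(n - 1 = n + n) := by omega
  have e4 : ¬(n + n = n - 1) := by omega
  have e5 : ¬(n - 1 = n - 1 + n) := by omega
  have e6 : ¬(n - 1 + n = n - 1) := by omega
  have e7 : ¬(n = n + n) := by omega
  have e8 : ¬(n + n = n) := by omega
  have e9 : ¬(n = n - 1 + n) := by omega
  have e10 : ¬(n - 1 + n = n) := by omega
  have e11 : ¬(n + n = n - 1 + n) := by omega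
  have e12 : ¬(n - 1 + n = n + n) := by omega
  have r1 : 1 ≤ n - 1 := by omega
  have r2 : 1 ≤ n := by omega
  have r3 : 1 ≤ n - 1 + n := by omega
  have r4 : 1 ≤ n + n := by omega
  have r5 : n - 1 ≤ m + n := by omega
  have r6 : n ≤ m + n := by omega
  have r7 : n - 1 + n ≤ m + n := by omega
  have r8 : n + n ≤ m + n := by omega
  have q1 : n ≤ 2 * n := by omega
  have q2 : n + n ≤ 2 * n := by omega
  have q3 : n - 1 ≤ 2 * n := by omega
  have q4 : n - 1 + n ≤ 2 * n := by omega
  unfold Wmat Dmat Pmat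
  simp only [smul_add, smul_sub, mul_add, add_mul, mul_sub, sub_mul, mul_one, one_mul,
    smul_mul_assoc, mul_smul_comm, smul_smul, Estd_mul_Estd,
    vT_mul_vT hn hm, vT_mul_Estd, Estd_mul_vT, dot_self,
    e1, e2, e3, e4, e5, e6, e7, e8, e9, e10, e11, e12, r1, r2, r3, r4, r5, r6, r7, r8,
    q1, q2, q3, q4,
    eq_self_iff_true, true_and, and_true, and_self, false_and, if_true, if_false,
    not_false_iff, not_false_eq_true,
    smul_zero, zero_mul, mul_zero, sub_zero, zero_sub, add_zero, zero_add, neg_zero,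
    smul_ite, smul_neg, neg_smul, neg_neg, mul_neg, neg_mul, sub_neg_eq_add]
  match_scalars <;> field_simp <;> ring

end


/-- **Item 1 of Lemma 6.4 of the paper, in `SO⁺(m,n)`**:
`w_{L_n}(a) · w_{L_{n−1}−L_n}(t) · w_{L_n}(a)⁻¹ = w_{L_{n−1}+L_n}(−(|a|²/2)·t)`. -/
theorem wL_conj_wdiff (m n : ℕ) (hmn : n + 1 ≤ m) (hn : 2 ≤ n)
    (a : Fin (m - n) → ℝ) (ha : a ≠ 0) (t : ℝ) (ht : t ≠ 0) :
    wL m n n a * wdiff m n (n - 1) n t * (wL m n n a)⁻¹ =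
      wplus m n (n - 1) n (-(sqnorm (m - n) a / 2) * t) := by
  have hs : sqnorm (m - n) a ≠ 0 := (sqnorm_pos (m - n) a ha).ne'
  have hσ : -(sqnorm (m - n) a / 2) * t ≠ 0 :=
    mul_ne_zero (neg_ne_zero.mpr (div_ne_zero hs two_ne_zero)) ht
  rw [wL_eq hn hmn a hs, wdiff_eq hn hmn t ht, wplus_eq hn hmn _ hσ]
  have hW := Wmat_mul_Wmat hn hmn a hs
  rw [Matrix.inv_eq_right_inv hW, Wmat_mul_Dmat hn hmn a t hs ht, mul_assoc, hW, mul_one]
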